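/- Let μ⁻, μ⁺ be probability measures on ℝ^d with compact supports X⁻, X⁺ and let c : X⁻ × X⁺ → ℝ be Lipschitz with respect to the norm ‖(x,y)‖ = max(|x|,|y|). Assume there are constants C > 0 and k⁻, k⁺ ≥ 0 such that for every δ ∈ (0,1), X⁻ can be covered by at most C·δ^{−k⁻} sets of diameter at most δ, and X⁺ by at most C·δ^{−k⁺} such sets. Then there exists M ≥ 0 such that for every ε ∈ (0,1): v_ε ≤ v_0 + min(k⁻,k⁺)·ε·log(1/ε) + M·ε. -/

import Mathlib

open MeasureTheory Real Set Filter Classical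
open scoped ENNReal NNReal Topology

noncomputable section

/-- Relative entropy (Kullback–Leibler divergence) `Ent(γ | q)`, with values in `EReal`:
it equals `∫ ρ log ρ dq` if `γ = ρ·q` (with `ρ log ρ` integrable) and `+∞` otherwise. -/
def Ent {α : Type*} [MeasurableSpace α] (γ q : Measure α) : EReal :=
  if γ ≪ q ∧ Integrable (fun x => ((γ.rnDeriv q) x).toReal * Real.log ((γ.rnDeriv q) x).toReal) q
  then ((∫ x, ((γ.rnDeriv q) x).toReal * Real.log ((γ.rnDeriv q) x).toReal ∂q : ℝ) : EReal)
  else ⊤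

/-- Entropic optimal transport cost
`v_ε = inf { ∫ c dγ + ε Ent(γ | μ⁻ ⊗ μ⁺) : γ coupling of μ⁻ and μ⁺ }`. -/
def entCost {α β : Type*} [MeasurableSpace α] [MeasurableSpace β]
    (μm : Measure α) (μp : Measure β) (c : α × β → ℝ) (ε : ℝ) : EReal :=
  sInf {v : EReal | ∃ γ : Measure (α × β), IsProbabilityMeasure γ ∧ γ.fst = μm ∧ γ.snd = μp ∧
    v = ((∫ p, c p ∂γ : ℝ) : EReal) + (ε : EReal) * Ent γ (μm.prod μp)}

/-- Support of a measure: the set of points all of whose open neighbourhoods have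
positive measure. -/
def msupport {α : Type*} [TopologicalSpace α] [MeasurableSpace α] (μ : Measure α) : Set α :=
  {x | ∀ U : Set α, IsOpen U → x ∈ U → μ U ≠ 0}

/-! ### Auxiliary lemmas -/

lemma measure_msupport_compl {α : Type*} [TopologicalSpace α] [MeasurableSpace α]
    [SecondCountableTopology α] (μ : Measure α) :
    μ (msupport μ)ᶜ = 0 := by
  obtain ⟨T, hTc, hTS, hT⟩ := TopologicalSpace.isOpen_sUnion_countable
    {U : Set α | IsOpen U ∧ μ U = 0} (fun s hs => hs.1)
  have h0 : μ (⋃₀ T) = 0 := (measure_sUnion_null_iff hTc).2 fun s hs => (hTS hs).2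
  refine measure_mono_null (fun x hx => ?_) h0
  simp only [msupport, mem_compl_iff, mem_setOf_eq] at hx
  push_neg at hx
  obtain ⟨U, hU, hxU, hμU⟩ := hx
  rw [hT]
  exact ⟨U, ⟨hU, hμU⟩, hxU⟩

lemma msupport_nonempty {α : Type*} [TopologicalSpace α] [MeasurableSpace α]
    [SecondCountableTopology α] (μ : Measure α) [IsProbabilityMeasure μ] :
    (msupport μ).Nonempty := by
  by_contra h
  rw [Set.not_nonempty_iff_eq_empty] at h
  have h2 := measure_msupport_compl μ
  rw [h, Set.compl_empty] at h2
  simpa [h2] using (measure_univ (μ := μ))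

lemma isClosed_msupport {α : Type*} [TopologicalSpace α] [MeasurableSpace α] (μ : Measure α) :
    IsClosed (msupport μ) := by
  rw [← isOpen_compl_iff]
  refine isOpen_iff_forall_mem_open.2 fun x hx => ?_
  simp only [msupport, mem_compl_iff, mem_setOf_eq] at hx
  push_neg at hx
  obtain ⟨U, hU, hxU, hμU⟩ := hx
  exact ⟨U, fun y hy hy2 => (hy2 U hU hy) hμU, hU, hxU⟩

lemma exists_partition {α : Type*} [MeasurableSpace α] {n : ℕ} {K : Set α} (hK : MeasurableSet K)
    (B : Fin n → Set α) (hBm : ∀ i, MeasurableSet (B i)) (hcov : K ⊆ ⋃ i, B i) :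
    ∃ D : Fin n → Set α, (∀ i, MeasurableSet (D i)) ∧ (∀ i, D i ⊆ K ∩ B i) ∧
      Pairwise (Function.onFun Disjoint D) ∧ (⋃ i, D i) = K := by
  refine ⟨fun i => (K ∩ B i) \ ⋃ j, ⋃ (_ : j < i), B j, fun i => ?_, fun i => diff_subset, ?_, ?_⟩
  · exact ((hK.inter (hBm i)).diff (MeasurableSet.iUnion fun j =>
      MeasurableSet.iUnion fun _ => hBm j))
  · intro i j hij
    rcases hij.lt_or_gt with h | h
    · refine Set.disjoint_left.2 fun x hx hx' => ?_
      exact hx'.2 (Set.mem_iUnion.2 ⟨i, Set.mem_iUnion.2 ⟨h, hx.1.2⟩⟩)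
    · refine Set.disjoint_left.2 fun x hx hx' => ?_
      exact hx.2 (Set.mem_iUnion.2 ⟨j, Set.mem_iUnion.2 ⟨h, hx'.1.2⟩⟩)
  · apply Set.Subset.antisymm
    · exact Set.iUnion_subset fun i => (diff_subset.trans inter_subset_left)
    · intro x hx
      have hne : (Finset.univ.filter (fun i => x ∈ B i)).Nonempty := by
        obtain ⟨i, hi⟩ := Set.mem_iUnion.1 (hcov hx)
        exact ⟨i, by simp [hi]⟩
      set i₀ := (Finset.univ.filter (fun i => x ∈ B i)).min' hne with hi₀
      have hxB : x ∈ B i₀ := by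
        have := (Finset.univ.filter (fun i => x ∈ B i)).min'_mem hne
        simpa using this
      refine Set.mem_iUnion.2 ⟨i₀, ⟨⟨hx, hxB⟩, fun hmem => ?_⟩⟩
      obtain ⟨j, hj⟩ := Set.mem_iUnion.1 hmem
      obtain ⟨hji, hxj⟩ := Set.mem_iUnion.1 hj
      have : i₀ ≤ j := Finset.min'_le _ _ (by simp [hxj])
      exact absurd hji (not_lt.2 this)

lemma sum_mul_log_le {n m : ℕ} (a : Fin n → Fin m → ℝ)
    (ha : ∀ i j, 0 ≤ a i j) (htot : ∑ i, ∑ j, a i j = 1) :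
    ∑ i, ∑ j, a i j * Real.log (a i j / ((∑ j', a i j') * (∑ i', a i' j))) ≤ Real.log n := by
  set R : Fin n → ℝ := fun i => ∑ j', a i j' with hR
  set S : Fin m → ℝ := fun j => ∑ i', a i' j with hS
  have hRnn : ∀ i, 0 ≤ R i := fun i => Finset.sum_nonneg fun j _ => ha i j
  have hSnn : ∀ j, 0 ≤ S j := fun j => Finset.sum_nonneg fun i _ => ha i j
  have haR : ∀ i j, a i j ≤ R i := fun i j =>
    Finset.single_le_sum (fun j' _ => ha i j') (Finset.mem_univ j)
  have haS : ∀ i j, a i j ≤ S j := fun i j =>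
    Finset.single_le_sum (fun i' _ => ha i' j) (Finset.mem_univ i)
  have step1 : ∀ i j, a i j * Real.log (a i j / (R i * S j)) ≤ a i j * Real.log (1 / R i) := by
    intro i j
    rcases eq_or_lt_of_le (ha i j) with h | h
    · simp [← h]
    · have hRpos : 0 < R i := lt_of_lt_of_le h (haR i j)
      have hSpos : 0 < S j := lt_of_lt_of_le h (haS i j)
      refine mul_le_mul_of_nonneg_left (Real.log_le_log (by positivity) ?_) (ha i j)
      rw [div_le_div_iff₀ (by positivity) hRpos, one_mul]
      calc a i j * R i ≤ S j * R i := mul_le_mul_of_nonneg_right (haS i j) hRpos.le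
        _ = R i * S j := mul_comm _ _
  have step2 : ∑ i, ∑ j, a i j * Real.log (1 / R i) = ∑ i, R i * Real.log (1 / R i) := by
    refine Finset.sum_congr rfl fun i _ => ?_
    rw [← Finset.sum_mul]
  have hRtot : ∑ i, R i = 1 := htot
  set t := Finset.univ.filter (fun i => 0 < R i) with ht
  have hzero : ∀ i ∈ Finset.univ \ t, R i * Real.log (1 / R i) = 0 := by
    intro i hi
    simp only [ht, Finset.mem_sdiff, Finset.mem_filter, Finset.mem_univ, true_and, not_lt] at hi
    have : R i = 0 := le_antisymm hi (hRnn i)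
    simp [this]
  have hsum_t : ∑ i, R i * Real.log (1 / R i) = ∑ i ∈ t, R i * Real.log (1 / R i) := by
    rw [← Finset.sum_subset (Finset.subset_univ t)]
    intro i hi hit
    exact hzero i (Finset.mem_sdiff.2 ⟨hi, hit⟩)
  have hRt : ∑ i ∈ t, R i = 1 := by
    rw [← hRtot, Finset.sum_subset (Finset.subset_univ t)]
    intro i hi hit
    simp only [ht, Finset.mem_filter, Finset.mem_univ, true_and, not_lt] at hit
    exact le_antisymm hit (hRnn i)
  have jensen := (strictConcaveOn_log_Ioi.concaveOn).le_map_sum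
    (t := t) (w := R) (p := fun i => (R i)⁻¹)
    (fun i _ => hRnn i) hRt
    (fun i hi => by
      simp only [ht, Finset.mem_filter, Finset.mem_univ, true_and] at hi
      exact Set.mem_Ioi.2 (inv_pos.2 hi))
  have hsimp : ∑ i ∈ t, R i • (R i)⁻¹ = (t.card : ℝ) := by
    have h1 : ∀ i ∈ t, R i • (R i)⁻¹ = 1 := by
      intro i hi
      simp only [ht, Finset.mem_filter, Finset.mem_univ, true_and] at hi
      rw [smul_eq_mul, mul_inv_cancel₀ (ne_of_gt hi)]
    rw [Finset.sum_congr rfl h1, Finset.sum_const, nsmul_eq_mul, mul_one]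
  calc ∑ i, ∑ j, a i j * Real.log (a i j / (R i * S j))
      ≤ ∑ i, ∑ j, a i j * Real.log (1 / R i) :=
        Finset.sum_le_sum fun i _ => Finset.sum_le_sum fun j _ => step1 i j
    _ = ∑ i ∈ t, R i * Real.log (1 / R i) := by rw [step2, hsum_t]
    _ = ∑ i ∈ t, R i • Real.log ((R i)⁻¹) := by
        refine Finset.sum_congr rfl fun i hi => ?_
        rw [smul_eq_mul, one_div]
    _ ≤ Real.log (∑ i ∈ t, R i • (R i)⁻¹) := jensen
    _ = Real.log (t.card : ℝ) := by rw [hsimp]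
    _ ≤ Real.log n := by
        have hcard : (t.card : ℝ) ≤ n := by
          exact_mod_cast Finset.card_le_card (Finset.subset_univ t) |>.trans
            (le_of_eq (Finset.card_univ.trans (Fintype.card_fin n)))
        have htpos : 0 < (t.card : ℝ) := by
          have : t.Nonempty := by
            by_contra hemp
            rw [Finset.not_nonempty_iff_eq_empty] at hemp
            rw [hemp] at hRt
            simp at hRt
          exact_mod_cast Finset.card_pos.2 this
        exact Real.log_le_log htpos hcard

lemma sum_indicator_of_mem {ι α M : Type*} [Fintype ι] [AddCommMonoid M] {s : ι → Set α}
    (hd : Pairwise (Function.onFun Disjoint s)) (v : ι → M) {z : α} {q : ι} (hq : z ∈ s q) :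
    ∑ p, (s p).indicator (fun _ => v p) z = v q := by
  rw [Finset.sum_eq_single q]
  · exact Set.indicator_of_mem hq _
  · intro p _ hpq
    exact Set.indicator_of_notMem (fun hzp => (Set.disjoint_left.1 (hd hpq)) hzp hq) _
  · intro h; exact absurd (Finset.mem_univ q) h

lemma enn_cancel {a b : ℝ≥0∞} (ha : b = 0 → a = 0) (hb : b ≠ ⊤) : a * b⁻¹ * b = a := by
  rcases eq_or_ne b 0 with h | h
  · simp [h, ha h]
  · rw [mul_assoc, ENNReal.inv_mul_cancel h hb, mul_one]

lemma meas_inter_of_compl_null {α : Type*} [MeasurableSpace α] {μ : Measure α} {K S : Set α}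
    (h : μ Kᶜ = 0) : μ (K ∩ S) = μ S := by
  refine le_antisymm (measure_mono inter_subset_right) ?_
  calc μ S ≤ μ ((K ∩ S) ∪ Kᶜ) := measure_mono (fun x hx => by
        by_cases hK : x ∈ K
        · exact Or.inl ⟨hK, hx⟩
        · exact Or.inr hK)
    _ ≤ μ (K ∩ S) + μ Kᶜ := measure_union_le _ _
    _ = μ (K ∩ S) := by rw [h, add_zero]

lemma measure_eq_of_null {α : Type*} [MeasurableSpace α] {μ : Measure α} {s t u : Set α}
    (hsub : s ⊆ t) (hsub2 : t ⊆ s ∪ u) (hu : μ u = 0) : μ t = μ s := by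
  refine le_antisymm ?_ (measure_mono hsub)
  calc μ t ≤ μ (s ∪ u) := measure_mono hsub2
    _ ≤ μ s + μ u := measure_union_le _ _
    _ = μ s := by rw [hu, add_zero]

lemma le_sInf_add_coe {T : Set EReal} {a : EReal} {q : ℝ}
    (h : ∀ x ∈ T, a ≤ x + (q : EReal)) : a ≤ sInf T + (q : EReal) := by
  rw [← EReal.sub_le_iff_le_add (Or.inl (EReal.coe_ne_bot q)) (Or.inl (EReal.coe_ne_top q))]
  exact le_sInf fun x hx => (EReal.sub_le_iff_le_add (Or.inl (EReal.coe_ne_bot q))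
    (Or.inl (EReal.coe_ne_top q))).2 (h x hx)

/-- Upper bound for Lipschitz costs when the supports have box-counting exponents `k⁻, k⁺`:
`v_ε ≤ v₀ + min(k⁻,k⁺) ε log(1/ε) + M ε` on `(0,1)`. -/
theorem entCost_upper_bound_box_dimension {d : ℕ}
    (μm μp : Measure (EuclideanSpace ℝ (Fin d)))
    [IsProbabilityMeasure μm] [IsProbabilityMeasure μp]
    (hXm : IsCompact (msupport μm)) (hXp : IsCompact (msupport μp))
    (c : EuclideanSpace ℝ (Fin d) × EuclideanSpace ℝ (Fin d) → ℝ)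
    (L : ℝ≥0) (hc : LipschitzOnWith L c (msupport μm ×ˢ msupport μp))
    (C km kp : ℝ) (hC : 0 < C) (hkm : 0 ≤ km) (hkp : 0 ≤ kp)
    (hcovm : ∀ δ ∈ Set.Ioo (0 : ℝ) 1, ∃ (n : ℕ) (A : Fin n → Set (EuclideanSpace ℝ (Fin d))),
      (n : ℝ) ≤ C * δ ^ (-km) ∧ msupport μm ⊆ ⋃ i, A i ∧
      ∀ i, EMetric.diam (A i) ≤ ENNReal.ofReal δ)
    (hcovp : ∀ δ ∈ Set.Ioo (0 : ℝ) 1, ∃ (n : ℕ) (A : Fin n → Set (EuclideanSpace ℝ (Fin d))),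
      (n : ℝ) ≤ C * δ ^ (-kp) ∧ msupport μp ⊆ ⋃ i, A i ∧
      ∀ i, EMetric.diam (A i) ≤ ENNReal.ofReal δ) :
    ∃ M : ℝ, 0 ≤ M ∧ ∀ ε ∈ Set.Ioo (0 : ℝ) 1,
      entCost μm μp c ε ≤ entCost μm μp c 0
        + ((min km kp * (ε * Real.log (1 / ε)) + M * ε : ℝ) : EReal) := by
  classical
  set Km := msupport μm with hKmdef
  set Kp := msupport μp with hKpdef
  have hKmcl : IsClosed Km := isClosed_msupport μm
  have hKpcl : IsClosed Kp := isClosed_msupport μp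
  have hKmms : MeasurableSet Km := hKmcl.measurableSet
  have hKpms : MeasurableSet Kp := hKpcl.measurableSet
  have hμmKm : μm Kmᶜ = 0 := measure_msupport_compl μm
  have hμpKp : μp Kpᶜ = 0 := measure_msupport_compl μp
  have hKmne : Km.Nonempty := msupport_nonempty μm
  have hKpne : Kp.Nonempty := msupport_nonempty μp
  -- bounded continuous extension of the cost
  have hcont : ContinuousOn c (Km ×ˢ Kp) := hc.continuousOn
  obtain ⟨B₀, hB₀⟩ := (hXm.prod hXp).exists_bound_of_continuousOn hcont
  set B := max B₀ 0 with hBdef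
  have hBnn : (0:ℝ) ≤ B := le_max_right _ _
  obtain ⟨g₀, hg₀⟩ := ContinuousMap.exists_restrict_eq (Y := ℝ) (hKmcl.prod hKpcl)
    ⟨_, continuousOn_iff_continuous_restrict.1 hcont⟩
  have hg₀eq : ∀ z ∈ Km ×ˢ Kp, g₀ z = c z := by
    intro z hz
    have := congrArg (fun f => ContinuousMap.toFun f ⟨z, hz⟩) hg₀
    simpa [ContinuousMap.restrict] using this
  set g : EuclideanSpace ℝ (Fin d) × EuclideanSpace ℝ (Fin d) → ℝ :=
    fun z => max (min (g₀ z) B) (-B) with hgdef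
  have hgcont : Continuous g := (g₀.continuous.min continuous_const).max continuous_const
  have hgbd : ∀ z, |g z| ≤ B := by
    intro z
    rw [abs_le]
    constructor
    · exact le_max_right _ _
    · exact max_le (min_le_right _ _) (by linarith)
  have hgc : ∀ z ∈ Km ×ˢ Kp, g z = c z := by
    intro z hz
    have h1 : |c z| ≤ B := le_trans (by simpa [Real.norm_eq_abs] using hB₀ z hz) (le_max_left _ _)
    rw [abs_le] at h1
    rw [hgdef]
    simp only
    rw [hg₀eq z hz, min_eq_left h1.2, max_eq_left h1.1]
  have hgint : ∀ (γ : Measure (EuclideanSpace ℝ (Fin d) × EuclideanSpace ℝ (Fin d)))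
      [IsFiniteMeasure γ], Integrable g γ := by
    intro γ _
    refine Integrable.mono' (integrable_const B) hgcont.aestronglyMeasurable
      (ae_of_all _ fun z => ?_)
    simpa [Real.norm_eq_abs] using hgbd z
  have hconc : ∀ (γ : Measure (EuclideanSpace ℝ (Fin d) × EuclideanSpace ℝ (Fin d))),
      γ.fst = μm → γ.snd = μp → γ ((Km ×ˢ Kp)ᶜ) = 0 := by
    intro γ hfst hsnd
    have h1 : γ (Kmᶜ ×ˢ (univ : Set (EuclideanSpace ℝ (Fin d)))) = 0 := by
      rw [Set.prod_univ, ← Measure.fst_apply hKmms.compl, hfst]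
      exact hμmKm
    have h2 : γ ((univ : Set (EuclideanSpace ℝ (Fin d))) ×ˢ Kpᶜ) = 0 := by
      rw [Set.univ_prod, ← Measure.snd_apply hKpms.compl, hsnd]
      exact hμpKp
    rw [Set.compl_prod_eq_union]
    exact measure_union_null h1 h2
  have hceqg : ∀ (γ : Measure (EuclideanSpace ℝ (Fin d) × EuclideanSpace ℝ (Fin d))),
      γ ((Km ×ˢ Kp)ᶜ) = 0 → ∫ p, c p ∂γ = ∫ p, g p ∂γ := by
    intro γ hγ
    refine integral_congr_ae ?_
    have : {z | c z ≠ g z} ⊆ (Km ×ˢ Kp)ᶜ := by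
      intro z hz hzK
      exact hz (hgc z hzK).symm
    exact (measure_mono_null this hγ : _)
  set M : ℝ := 2 * (L : ℝ) + max (Real.log C) 0 with hMdef
  have hMnn : 0 ≤ M := add_nonneg (by positivity) (le_max_right _ _)
  refine ⟨M, hMnn, fun ε hε => ?_⟩
  obtain ⟨hε0, hε1⟩ := hε
  -- the key estimate, for an arbitrary coupling γ₀
  have key : ∀ (γ₀ : Measure (EuclideanSpace ℝ (Fin d) × EuclideanSpace ℝ (Fin d))),
      IsProbabilityMeasure γ₀ → γ₀.fst = μm → γ₀.snd = μp →
      entCost μm μp c ε ≤ ((∫ p, c p ∂γ₀ : ℝ) : EReal) +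
        ((min km kp * (ε * Real.log (1 / ε)) + M * ε : ℝ) : EReal) := by
    intro γ₀ hγ₀prob hγ₀fst hγ₀snd
    obtain ⟨n, Am, hncard, hAmcov, hAmdiam⟩ := hcovm ε ⟨hε0, hε1⟩
    obtain ⟨m, Ap, hmcard, hApcov, hApdiam⟩ := hcovp ε ⟨hε0, hε1⟩
    obtain ⟨Dm, hDmms, hDmsub, hDmdisj, hDmunion⟩ := exists_partition hKmms
      (fun i => closure (Am i)) (fun i => isClosed_closure.measurableSet)
      (hAmcov.trans (Set.iUnion_mono fun i => subset_closure))
    obtain ⟨Dp, hDpms, hDpsub, hDpdisj, hDpunion⟩ := exists_partition hKpms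
      (fun j => closure (Ap j)) (fun j => isClosed_closure.measurableSet)
      (hApcov.trans (Set.iUnion_mono fun j => subset_closure))
    set cell : Fin n × Fin m → Set (EuclideanSpace ℝ (Fin d) × EuclideanSpace ℝ (Fin d)) :=
      fun p => Dm p.1 ×ˢ Dp p.2 with hcelldef
    have hcellms : ∀ p, MeasurableSet (cell p) := fun p => (hDmms p.1).prod (hDpms p.2)
    have hcelldisj : Pairwise (Function.onFun Disjoint cell) := by
      intro p q hpq
      refine Set.disjoint_left.2 fun z hz hz' => ?_
      rcases eq_or_ne p.1 q.1 with h1 | h1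
      · have h2 : p.2 ≠ q.2 := fun h2 => hpq (Prod.ext h1 h2)
        exact Set.disjoint_left.1 (hDpdisj h2) hz.2 hz'.2
      · exact Set.disjoint_left.1 (hDmdisj h1) hz.1 hz'.1
    have hnullp : γ₀ ((univ : Set (EuclideanSpace ℝ (Fin d))) ×ˢ Kpᶜ) = 0 := by
      rw [Set.univ_prod, ← Measure.snd_apply hKpms.compl, hγ₀snd]; exact hμpKp
    have hnullm : γ₀ (Kmᶜ ×ˢ (univ : Set (EuclideanSpace ℝ (Fin d)))) = 0 := by
      rw [Set.prod_univ, ← Measure.fst_apply hKmms.compl, hγ₀fst]; exact hμmKm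
    have hfstap : ∀ s : Set (EuclideanSpace ℝ (Fin d)), MeasurableSet s →
        γ₀ (s ×ˢ (univ : Set (EuclideanSpace ℝ (Fin d)))) = μm s := by
      intro s hs
      rw [Set.prod_univ, ← Measure.fst_apply hs, hγ₀fst]
    have hsndap : ∀ s : Set (EuclideanSpace ℝ (Fin d)), MeasurableSet s →
        γ₀ ((univ : Set (EuclideanSpace ℝ (Fin d))) ×ˢ s) = μp s := by
      intro s hs
      rw [Set.univ_prod, ← Measure.snd_apply hs, hγ₀snd]
    have haler : ∀ p, γ₀ (cell p) ≤ μm (Dm p.1) := by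
      intro p
      rw [← hfstap _ (hDmms p.1)]
      exact measure_mono (Set.prod_mono_right (Set.subset_univ _))
    have hales : ∀ p, γ₀ (cell p) ≤ μp (Dp p.2) := by
      intro p
      rw [← hsndap _ (hDpms p.2)]
      exact measure_mono (Set.prod_mono_left (Set.subset_univ _))
    have hrne : ∀ i, μm (Dm i) ≠ ⊤ := fun i => (measure_lt_top μm _).ne
    have hsne : ∀ j, μp (Dp j) ≠ ⊤ := fun j => (measure_lt_top μp _).ne
    have hrowsum : ∀ i, ∑ j, γ₀ (cell (i, j)) = μm (Dm i) := by
      intro i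
      have hdisj : Pairwise (Function.onFun Disjoint (fun j => Dm i ×ˢ Dp j)) := by
        intro j j' hjj'
        exact Set.disjoint_left.2 fun z hz hz' => Set.disjoint_left.1 (hDpdisj hjj') hz.2 hz'.2
      have : ∑ j, γ₀ (cell (i, j)) = γ₀ (Dm i ×ˢ Kp) := by
        rw [← tsum_fintype (L := .unconditional _), ← measure_iUnion hdisj (fun j => (hDmms i).prod (hDpms j)),
          ← Set.prod_iUnion, hDpunion]
      rw [this, ← hfstap _ (hDmms i)]
      exact (measure_eq_of_null (Set.prod_mono_right (Set.subset_univ _))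
        (fun z hz => by
          by_cases h : z.2 ∈ Kp
          · exact Or.inl ⟨hz.1, h⟩
          · exact Or.inr ⟨trivial, h⟩) hnullp).symm
    have hcolsum : ∀ j, ∑ i, γ₀ (cell (i, j)) = μp (Dp j) := by
      intro j
      have hdisj : Pairwise (Function.onFun Disjoint (fun i => Dm i ×ˢ Dp j)) := by
        intro i i' hii'
        exact Set.disjoint_left.2 fun z hz hz' => Set.disjoint_left.1 (hDmdisj hii') hz.1 hz'.1
      have : ∑ i, γ₀ (cell (i, j)) = γ₀ (Km ×ˢ Dp j) := by
        rw [← tsum_fintype (L := .unconditional _), ← measure_iUnion hdisj (fun i => (hDmms i).prod (hDpms j)),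
          ← Set.iUnion_prod_const, hDmunion]
      rw [this, ← hsndap _ (hDpms j)]
      exact (measure_eq_of_null (Set.prod_mono_left (Set.subset_univ _))
        (fun z hz => by
          by_cases h : z.1 ∈ Km
          · exact Or.inl ⟨h, hz.2⟩
          · exact Or.inr ⟨h, trivial⟩) hnullm).symm
    have htotal : ∑ p : Fin n × Fin m, γ₀ (cell p) = 1 := by
      rw [Fintype.sum_prod_type]
      rw [Finset.sum_congr rfl fun i _ => hrowsum i]
      rw [← tsum_fintype (L := .unconditional _), ← measure_iUnion hDmdisj hDmms, hDmunion]
      exact (prob_compl_eq_zero_iff hKmms).1 hμmKm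
    set coef : Fin n × Fin m → ℝ≥0∞ :=
      fun p => γ₀ (cell p) * (μm (Dm p.1) * μp (Dp p.2))⁻¹ with hcoefdef
    have hzero : ∀ p, μm (Dm p.1) * μp (Dp p.2) = 0 → γ₀ (cell p) = 0 := by
      intro p h
      rcases mul_eq_zero.1 h with h | h
      · exact le_antisymm (h ▸ haler p) zero_le
      · exact le_antisymm (h ▸ hales p) zero_le
    have hcoefmul : ∀ p, coef p * (μm (Dm p.1) * μp (Dp p.2)) = γ₀ (cell p) :=
      fun p => enn_cancel (hzero p) (ENNReal.mul_ne_top (hrne p.1) (hsne p.2))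
    have hcoefne : ∀ p, coef p ≠ ⊤ := by
      intro p
      rcases eq_or_ne (μm (Dm p.1) * μp (Dp p.2)) 0 with h | h
      · rw [hcoefdef]; simp [hzero p h]
      · exact ENNReal.mul_ne_top (measure_ne_top γ₀ _) (ENNReal.inv_ne_top.2 h)
    set ρ : EuclideanSpace ℝ (Fin d) × EuclideanSpace ℝ (Fin d) → ℝ≥0∞ :=
      fun z => ∑ p, (cell p).indicator (fun _ => coef p) z with hρdef
    have hρmeas : Measurable ρ :=
      Finset.measurable_sum _ fun p _ => (measurable_const.indicator (hcellms p))
    set γ₁ := (μm.prod μp).withDensity ρ with hγ₁def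
    have hγ₁app : ∀ T, MeasurableSet T →
        γ₁ T = ∑ p, coef p * (μm.prod μp) (cell p ∩ T) := by
      intro T hT
      rw [hγ₁def, withDensity_apply _ hT]
      rw [lintegral_finset_sum _ fun p _ => measurable_const.indicator (hcellms p)]
      refine Finset.sum_congr rfl fun p _ => ?_
      rw [lintegral_indicator (hcellms p), setLIntegral_const,
        Measure.restrict_apply (hcellms p)]
    have hprodcell : ∀ p, (μm.prod μp) (cell p) = μm (Dm p.1) * μp (Dp p.2) :=
      fun p => Measure.prod_prod _ _
    have hγ₁cell : ∀ q, γ₁ (cell q) = γ₀ (cell q) := by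
      intro q
      rw [hγ₁app _ (hcellms q)]
      rw [Finset.sum_eq_single q]
      · rw [Set.inter_self, hprodcell, hcoefmul]
      · intro p _ hpq
        rw [(hcelldisj hpq).inter_eq, measure_empty, mul_zero]
      · intro h; exact absurd (Finset.mem_univ q) h
    have hγ₁univ : γ₁ univ = 1 := by
      rw [hγ₁app _ MeasurableSet.univ]
      rw [Finset.sum_congr rfl fun p _ =>
        (by rw [Set.inter_univ, hprodcell, hcoefmul] :
          coef p * (μm.prod μp) (cell p ∩ univ) = γ₀ (cell p))]
      exact htotal
    have hγ₁prob : IsProbabilityMeasure γ₁ := ⟨hγ₁univ⟩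
    have hγ₁fst : γ₁.fst = μm := by
      refine Measure.ext fun S hS => ?_
      rw [Measure.fst_apply hS, ← Set.prod_univ, hγ₁app _ (hS.prod MeasurableSet.univ)]
      have hterm : ∀ p : Fin n × Fin m,
          coef p * (μm.prod μp) (cell p ∩ S ×ˢ univ)
            = γ₀ (cell p) * (μm (Dm p.1))⁻¹ * μm (Dm p.1 ∩ S) := by
        intro p
        have hint : cell p ∩ S ×ˢ univ = (Dm p.1 ∩ S) ×ˢ Dp p.2 := by
          simp only [hcelldef]
          rw [Set.prod_inter_prod, Set.inter_univ]
        rw [hint, Measure.prod_prod]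
        rcases eq_or_ne (μp (Dp p.2)) 0 with hs0 | hs0
        · simp only [hcoefdef]
          rw [hzero p (by rw [hs0, mul_zero]), hs0]
          simp
        · have h1 : (μm (Dm p.1) * μp (Dp p.2))⁻¹ = (μm (Dm p.1))⁻¹ * (μp (Dp p.2))⁻¹ :=
            ENNReal.mul_inv (Or.inr (hsne p.2)) (Or.inl (hrne p.1))
          simp only [hcoefdef]
          rw [h1]
          calc γ₀ (cell p) * ((μm (Dm p.1))⁻¹ * (μp (Dp p.2))⁻¹)
                * (μm (Dm p.1 ∩ S) * μp (Dp p.2))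
              = γ₀ (cell p) * (μm (Dm p.1))⁻¹ * μm (Dm p.1 ∩ S)
                * ((μp (Dp p.2))⁻¹ * μp (Dp p.2)) := by ring
            _ = γ₀ (cell p) * (μm (Dm p.1))⁻¹ * μm (Dm p.1 ∩ S) := by
                rw [ENNReal.inv_mul_cancel hs0 (hsne p.2), mul_one]
      rw [Finset.sum_congr rfl fun p _ => hterm p, Fintype.sum_prod_type]
      have hinner : ∀ i, ∑ j, γ₀ (cell (i, j)) * (μm (Dm i))⁻¹ * μm (Dm i ∩ S)
          = μm (Dm i ∩ S) := by
        intro i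
        rw [← Finset.sum_mul, ← Finset.sum_mul, hrowsum i]
        rcases eq_or_ne (μm (Dm i)) 0 with h0 | h0
        · rw [measure_mono_null Set.inter_subset_left h0, mul_zero]
        · rw [ENNReal.mul_inv_cancel h0 (hrne i), one_mul]
      rw [Finset.sum_congr rfl fun i _ => hinner i]
      have hdisj2 : Pairwise (Function.onFun Disjoint (fun i => Dm i ∩ S)) := fun i i' hii' =>
        (hDmdisj hii').mono Set.inter_subset_left Set.inter_subset_left
      rw [← tsum_fintype (L := .unconditional _), ← measure_iUnion hdisj2 (fun i => (hDmms i).inter hS),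
        ← Set.iUnion_inter, hDmunion]
      exact meas_inter_of_compl_null hμmKm
    have hγ₁snd : γ₁.snd = μp := by
      refine Measure.ext fun S hS => ?_
      rw [Measure.snd_apply hS, ← Set.univ_prod, hγ₁app _ (MeasurableSet.univ.prod hS)]
      have hterm : ∀ p : Fin n × Fin m,
          coef p * (μm.prod μp) (cell p ∩ univ ×ˢ S)
            = γ₀ (cell p) * (μp (Dp p.2))⁻¹ * μp (Dp p.2 ∩ S) := by
        intro p
        have hint : cell p ∩ univ ×ˢ S = Dm p.1 ×ˢ (Dp p.2 ∩ S) := by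
          simp only [hcelldef]
          rw [Set.prod_inter_prod, Set.inter_univ]
        rw [hint, Measure.prod_prod]
        rcases eq_or_ne (μm (Dm p.1)) 0 with hr0 | hr0
        · simp only [hcoefdef]
          rw [hzero p (by rw [hr0, zero_mul]), hr0]
          simp
        · have h1 : (μm (Dm p.1) * μp (Dp p.2))⁻¹ = (μm (Dm p.1))⁻¹ * (μp (Dp p.2))⁻¹ :=
            ENNReal.mul_inv (Or.inr (hsne p.2)) (Or.inl (hrne p.1))
          simp only [hcoefdef]
          rw [h1]
          calc γ₀ (cell p) * ((μm (Dm p.1))⁻¹ * (μp (Dp p.2))⁻¹)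
                * (μm (Dm p.1) * μp (Dp p.2 ∩ S))
              = γ₀ (cell p) * (μp (Dp p.2))⁻¹ * μp (Dp p.2 ∩ S)
                * ((μm (Dm p.1))⁻¹ * μm (Dm p.1)) := by ring
            _ = γ₀ (cell p) * (μp (Dp p.2))⁻¹ * μp (Dp p.2 ∩ S) := by
                rw [ENNReal.inv_mul_cancel hr0 (hrne p.1), mul_one]
      rw [Finset.sum_congr rfl fun p _ => hterm p, Fintype.sum_prod_type, Finset.sum_comm]
      have hinner : ∀ j, ∑ i, γ₀ (cell (i, j)) * (μp (Dp j))⁻¹ * μp (Dp j ∩ S)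
          = μp (Dp j ∩ S) := by
        intro j
        rw [← Finset.sum_mul, ← Finset.sum_mul, hcolsum j]
        rcases eq_or_ne (μp (Dp j)) 0 with h0 | h0
        · rw [measure_mono_null Set.inter_subset_left h0, mul_zero]
        · rw [ENNReal.mul_inv_cancel h0 (hsne j), one_mul]
      rw [Finset.sum_congr rfl fun j _ => hinner j]
      have hdisj2 : Pairwise (Function.onFun Disjoint (fun j => Dp j ∩ S)) := fun j j' hjj' =>
        (hDpdisj hjj').mono Set.inter_subset_left Set.inter_subset_left
      rw [← tsum_fintype (L := .unconditional _), ← measure_iUnion hdisj2 (fun j => (hDpms j).inter hS),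
        ← Set.iUnion_inter, hDpunion]
      exact meas_inter_of_compl_null hμpKp
    -- Entropy of γ₁
    have hac : γ₁ ≪ μm.prod μp := withDensity_absolutelyContinuous _ _
    have hrn : γ₁.rnDeriv (μm.prod μp) =ᵐ[μm.prod μp] ρ :=
      Measure.rnDeriv_withDensity _ hρmeas
    set t : Fin n × Fin m → ℝ := fun p => (coef p).toReal * Real.log (coef p).toReal with htdef
    set F : EuclideanSpace ℝ (Fin d) × EuclideanSpace ℝ (Fin d) → ℝ :=
      fun z => ∑ p, (cell p).indicator (fun _ => t p) z with hFdef
    have hρF : ∀ z, (ρ z).toReal * Real.log (ρ z).toReal = F z := by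
      intro z
      by_cases hz : ∃ q, z ∈ cell q
      · obtain ⟨q, hq⟩ := hz
        have h1 : ρ z = coef q := by
          rw [hρdef]; exact sum_indicator_of_mem hcelldisj _ hq
        have h2 : F z = t q := by
          rw [hFdef]; exact sum_indicator_of_mem hcelldisj _ hq
        rw [h1, h2, htdef]
      · push_neg at hz
        have h1 : ρ z = 0 := by
          rw [hρdef]
          exact Finset.sum_eq_zero fun p _ => Set.indicator_of_notMem (hz p) _
        have h2 : F z = 0 := by
          rw [hFdef]
          exact Finset.sum_eq_zero fun p _ => Set.indicator_of_notMem (hz p) _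
        rw [h1, h2]
        simp
    have hFint : Integrable F (μm.prod μp) :=
      integrable_finset_sum _ fun p _ => (integrable_const (t p)).indicator (hcellms p)
    have haeeq : (fun z => ((γ₁.rnDeriv (μm.prod μp)) z).toReal *
        Real.log ((γ₁.rnDeriv (μm.prod μp)) z).toReal) =ᵐ[μm.prod μp] F := by
      filter_upwards [hrn] with z hz
      rw [hz, hρF]
    have hEntint : Integrable (fun z => ((γ₁.rnDeriv (μm.prod μp)) z).toReal *
        Real.log ((γ₁.rnDeriv (μm.prod μp)) z).toReal) (μm.prod μp) :=
      hFint.congr haeeq.symm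
    set I : ℝ := ∑ p, t p * ((μm.prod μp) (cell p)).toReal with hIdef
    have hIntegral : ∫ z, ((γ₁.rnDeriv (μm.prod μp)) z).toReal *
        Real.log ((γ₁.rnDeriv (μm.prod μp)) z).toReal ∂(μm.prod μp) = I := by
      rw [integral_congr_ae haeeq, hFdef]
      rw [integral_finset_sum _ fun p _ => (integrable_const (t p)).indicator (hcellms p)]
      refine Finset.sum_congr rfl fun p _ => ?_
      rw [integral_indicator_const _ (hcellms p), smul_eq_mul, mul_comm, measureReal_def]
    have hEnt : Ent γ₁ (μm.prod μp) = (I : EReal) := by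
      rw [Ent, if_pos ⟨hac, hEntint⟩, hIntegral]
    -- entropy bound
    have hnpos : 0 < n := by
      obtain ⟨x, hx⟩ := hKmne
      rw [← hDmunion] at hx
      obtain ⟨i, _⟩ := Set.mem_iUnion.1 hx
      exact i.pos
    have hmpos : 0 < m := by
      obtain ⟨x, hx⟩ := hKpne
      rw [← hDpunion] at hx
      obtain ⟨j, _⟩ := Set.mem_iUnion.1 hx
      exact j.pos
    set A : Fin n → Fin m → ℝ := fun i j => (γ₀ (cell (i, j))).toReal with hAdef
    have hAnn : ∀ i j, 0 ≤ A i j := fun i j => ENNReal.toReal_nonneg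
    have hAR : ∀ i, ∑ j', A i j' = (μm (Dm i)).toReal := by
      intro i
      rw [← ENNReal.toReal_sum (fun j _ => measure_ne_top _ _), hrowsum i]
    have hAS : ∀ j, ∑ i', A i' j = (μp (Dp j)).toReal := by
      intro j
      rw [← ENNReal.toReal_sum (fun i _ => measure_ne_top _ _), hcolsum j]
    have hAtot : ∑ i, ∑ j, A i j = 1 := by
      have h1 := congrArg ENNReal.toReal htotal
      rw [ENNReal.toReal_sum (fun p _ => measure_ne_top _ _), Fintype.sum_prod_type] at h1
      simpa using h1
    have htermI : ∀ p : Fin n × Fin m, t p * ((μm.prod μp) (cell p)).toReal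
        = A p.1 p.2 * Real.log (A p.1 p.2 / ((∑ j', A p.1 j') * (∑ i', A i' p.2))) := by
      intro p
      rw [hprodcell p, hAR p.1, hAS p.2, htdef]
      simp only
      have hcoef : (coef p).toReal
          = A p.1 p.2 / ((μm (Dm p.1)).toReal * (μp (Dp p.2)).toReal) := by
        simp only [hcoefdef]
        rw [ENNReal.toReal_mul, ENNReal.toReal_inv, ENNReal.toReal_mul, div_eq_mul_inv]
      rw [hcoef, ENNReal.toReal_mul]
      rcases eq_or_ne ((μm (Dm p.1)).toReal * (μp (Dp p.2)).toReal) 0 with h0 | h0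
      · have hA0 : A p.1 p.2 = 0 := by
          have h2 : μm (Dm p.1) * μp (Dp p.2) = 0 := by
            rcases mul_eq_zero.1 h0 with h | h
            · rcases ENNReal.toReal_eq_zero_iff _ |>.1 h with h' | h'
              · rw [h', zero_mul]
              · exact absurd h' (hrne p.1)
            · rcases ENNReal.toReal_eq_zero_iff _ |>.1 h with h' | h'
              · rw [h', mul_zero]
              · exact absurd h' (hsne p.2)
          simp [hAdef, hzero p h2]
        rw [h0, hA0]
        simp
      · have hring : A p.1 p.2 / ((μm (Dm p.1)).toReal * (μp (Dp p.2)).toReal) *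
            Real.log (A p.1 p.2 / ((μm (Dm p.1)).toReal * (μp (Dp p.2)).toReal)) *
            ((μm (Dm p.1)).toReal * (μp (Dp p.2)).toReal)
            = (A p.1 p.2 / ((μm (Dm p.1)).toReal * (μp (Dp p.2)).toReal) *
              ((μm (Dm p.1)).toReal * (μp (Dp p.2)).toReal)) *
              Real.log (A p.1 p.2 / ((μm (Dm p.1)).toReal * (μp (Dp p.2)).toReal)) := by
          ring
        rw [hring, div_mul_cancel₀ _ h0]
    have hIn : I ≤ Real.log n := by
      rw [hIdef, Finset.sum_congr rfl fun p _ => htermI p, Fintype.sum_prod_type]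
      exact sum_mul_log_le A hAnn hAtot
    have hIm : I ≤ Real.log m := by
      rw [hIdef, Finset.sum_congr rfl fun p _ => htermI p, Fintype.sum_prod_type]
      have h1 := sum_mul_log_le (fun j i => A i j) (fun j i => hAnn i j)
        (by rw [Finset.sum_comm]; exact hAtot)
      have heq : ∀ i j, A i j * Real.log (A i j / ((∑ j', A i j') * (∑ i', A i' j)))
          = A i j * Real.log (A i j / ((∑ i', A i' j) * (∑ j', A i j'))) := by
        intro i j
        rw [mul_comm (∑ j', A i j') (∑ i', A i' j)]
      rw [Finset.sum_comm]
      rw [Finset.sum_congr rfl fun j _ => Finset.sum_congr rfl fun i _ => heq i j]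
      exact h1
    have hlogn : Real.log n ≤ Real.log C + km * Real.log (1 / ε) := by
      have h1 : Real.log n ≤ Real.log (C * ε ^ (-km)) :=
        Real.log_le_log (by exact_mod_cast hnpos) hncard
      rw [Real.log_mul (ne_of_gt hC) (ne_of_gt (Real.rpow_pos_of_pos hε0 _)),
        Real.log_rpow hε0] at h1
      rw [one_div, Real.log_inv]
      have h2 : -km * Real.log ε = km * -Real.log ε := by ring
      linarith
    have hlogm : Real.log m ≤ Real.log C + kp * Real.log (1 / ε) := by
      have h1 : Real.log m ≤ Real.log (C * ε ^ (-kp)) :=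
        Real.log_le_log (by exact_mod_cast hmpos) hmcard
      rw [Real.log_mul (ne_of_gt hC) (ne_of_gt (Real.rpow_pos_of_pos hε0 _)),
        Real.log_rpow hε0] at h1
      rw [one_div, Real.log_inv]
      have h2 : -kp * Real.log ε = kp * -Real.log ε := by ring
      linarith
    have hIbound : I ≤ Real.log C + min km kp * Real.log (1 / ε) := by
      rcases le_total km kp with hk | hk
      · rw [min_eq_left hk]; exact hIn.trans hlogn
      · rw [min_eq_right hk]; exact hIm.trans hlogm
    -- cost comparison
    have hUeq : ⋃ p, cell p = Km ×ˢ Kp := by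
      simp only [hcelldef]
      rw [Set.iUnion_prod Dm Dp, hDmunion, hDpunion]
    have hγ₀null : γ₀ ((Km ×ˢ Kp)ᶜ) = 0 := hconc γ₀ hγ₀fst hγ₀snd
    have hγ₁null : γ₁ ((Km ×ˢ Kp)ᶜ) = 0 := hconc γ₁ hγ₁fst hγ₁snd
    have hsplit : ∀ (γ : Measure (EuclideanSpace ℝ (Fin d) × EuclideanSpace ℝ (Fin d)))
        [IsFiniteMeasure γ], γ ((Km ×ˢ Kp)ᶜ) = 0 →
        ∫ z, g z ∂γ = ∑ p, ∫ z in cell p, g z ∂γ := by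
      intro γ hfin hnull
      have hint := hgint γ
      have h1 : ∫ z in (Km ×ˢ Kp)ᶜ, g z ∂γ = 0 := by
        rw [Measure.restrict_eq_zero.2 hnull, integral_zero_measure]
      have h2 := integral_add_compl (hKmms.prod hKpms) hint
      rw [← h2, h1, add_zero, ← hUeq]
      exact integral_iUnion_fintype hcellms hcelldisj fun p => hint.integrableOn
    have hcellsub : ∀ p, cell p ⊆ Km ×ˢ Kp := by
      intro p z hz
      exact ⟨(hDmsub p.1 hz.1).1, (hDpsub p.2 hz.2).1⟩
    have hosc : ∀ p, ∀ w ∈ cell p, ∀ z ∈ cell p, |g w - g z| ≤ (L : ℝ) * ε := by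
      intro p w hw z hz
      rw [hgc w (hcellsub p hw), hgc z (hcellsub p hz)]
      have hd := hc.dist_le_mul w (hcellsub p hw) z (hcellsub p hz)
      rw [Real.dist_eq] at hd
      refine hd.trans ?_
      have hε' : (0:ℝ) ≤ ε := hε0.le
      have hdist : dist w z ≤ ε := by
        rw [Prod.dist_eq]
        have h1 : dist w.1 z.1 ≤ ε := by
          rw [← edist_le_ofReal hε']
          calc edist w.1 z.1 ≤ EMetric.diam (closure (Am p.1)) :=
                EMetric.edist_le_diam_of_mem (hDmsub p.1 hw.1).2 (hDmsub p.1 hz.1).2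
            _ = EMetric.diam (Am p.1) := EMetric.diam_closure _
            _ ≤ ENNReal.ofReal ε := hAmdiam p.1
        have h2 : dist w.2 z.2 ≤ ε := by
          rw [← edist_le_ofReal hε']
          calc edist w.2 z.2 ≤ EMetric.diam (closure (Ap p.2)) :=
                EMetric.edist_le_diam_of_mem (hDpsub p.2 hw.2).2 (hDpsub p.2 hz.2).2
            _ = EMetric.diam (Ap p.2) := EMetric.diam_closure _
            _ ≤ ENNReal.ofReal ε := hApdiam p.2
        exact max_le h1 h2
      exact mul_le_mul_of_nonneg_left hdist L.coe_nonneg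
    have hcellest : ∀ p, ∫ z in cell p, g z ∂γ₁ ≤ ∫ z in cell p, g z ∂γ₀
        + 2 * (L : ℝ) * ε * (γ₀ (cell p)).toReal := by
      intro p
      rcases Set.eq_empty_or_nonempty (cell p) with hemp | ⟨z, hz⟩
      · rw [hemp]
        simp
      · have hest : ∀ (γ : Measure (EuclideanSpace ℝ (Fin d) × EuclideanSpace ℝ (Fin d)))
            [IsFiniteMeasure γ], γ (cell p) = γ₀ (cell p) →
            |∫ w in cell p, g w ∂γ - g z * (γ₀ (cell p)).toReal|
              ≤ (L : ℝ) * ε * (γ₀ (cell p)).toReal := by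
          intro γ hfin hcellval
          have hint : Integrable g γ := hgint γ
          have h1 : ∫ w in cell p, g w ∂γ - g z * (γ₀ (cell p)).toReal
              = ∫ w in cell p, (g w - g z) ∂γ := by
            rw [integral_sub hint.integrableOn
              (integrableOn_const (measure_lt_top _ _).ne)]
            rw [setIntegral_const, measureReal_def, hcellval, smul_eq_mul, mul_comm]
          rw [h1]
          have h2 := norm_setIntegral_le_of_norm_le_const (μ := γ) (s := cell p)
            (f := fun w => g w - g z) (C := (L : ℝ) * ε)
            (measure_lt_top _ _)
            (fun w hw => by rw [Real.norm_eq_abs]; exact hosc p w hw z hz)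
          rw [Real.norm_eq_abs, measureReal_def, hcellval] at h2
          exact h2
        have e1 := hest γ₁ (hγ₁cell p)
        have e0 := hest γ₀ rfl
        rw [abs_le] at e1 e0
        have := e1.2
        have := e0.1
        linarith
    have hsum1 : ∑ p, (γ₀ (cell p)).toReal = 1 := by
      rw [← ENNReal.toReal_sum (fun p _ => measure_ne_top _ _), htotal, ENNReal.toReal_one]
    have hcost : ∫ z, g z ∂γ₁ ≤ ∫ z, g z ∂γ₀ + 2 * (L : ℝ) * ε := by
      rw [hsplit γ₁ hγ₁null, hsplit γ₀ hγ₀null]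
      calc ∑ p, ∫ z in cell p, g z ∂γ₁
          ≤ ∑ p, (∫ z in cell p, g z ∂γ₀ + 2 * (L : ℝ) * ε * (γ₀ (cell p)).toReal) :=
            Finset.sum_le_sum fun p _ => hcellest p
        _ = ∑ p, ∫ z in cell p, g z ∂γ₀ + 2 * (L : ℝ) * ε * ∑ p, (γ₀ (cell p)).toReal := by
            rw [Finset.sum_add_distrib, Finset.mul_sum]
        _ = ∑ p, ∫ z in cell p, g z ∂γ₀ + 2 * (L : ℝ) * ε := by rw [hsum1, mul_one]
    -- conclusion of the key estimate
    have hv₁ : entCost μm μp c ε ≤ ((∫ q, c q ∂γ₁ : ℝ) : EReal) +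
        (ε : EReal) * Ent γ₁ (μm.prod μp) :=
      sInf_le ⟨γ₁, hγ₁prob, hγ₁fst, hγ₁snd, rfl⟩
    rw [hEnt] at hv₁
    have hcoe : ((∫ q, c q ∂γ₁ : ℝ) : EReal) + (ε : EReal) * (I : EReal)
        = ((∫ q, c q ∂γ₁ + ε * I : ℝ) : EReal) := by
      rw [← EReal.coe_mul, ← EReal.coe_add]
    rw [hcoe] at hv₁
    refine hv₁.trans ?_
    rw [← EReal.coe_add]
    refine EReal.coe_le_coe_iff.2 ?_
    have h1 : ∫ q, c q ∂γ₁ = ∫ q, g q ∂γ₁ := hceqg γ₁ hγ₁null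
    have h2 : ∫ q, c q ∂γ₀ = ∫ q, g q ∂γ₀ := hceqg γ₀ hγ₀null
    have h3 : ε * I ≤ ε * (Real.log C + min km kp * Real.log (1 / ε)) :=
      mul_le_mul_of_nonneg_left hIbound hε0.le
    have h4 : ε * Real.log C ≤ ε * max (Real.log C) 0 :=
      mul_le_mul_of_nonneg_left (le_max_left _ _) hε0.le
    have h5 : ε * (Real.log C + min km kp * Real.log (1 / ε))
        = ε * Real.log C + min km kp * (ε * Real.log (1 / ε)) := by ring
    have h6 : M * ε = 2 * (L : ℝ) * ε + ε * max (Real.log C) 0 := by rw [hMdef]; ring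
    rw [h1, h2]
    linarith [hcost]
  -- conclude by taking the infimum over couplings
  apply le_sInf_add_coe
  rintro x ⟨γ, hγprob, hγfst, hγsnd, rfl⟩
  have h0 : ((0:ℝ) : EReal) * Ent γ (μm.prod μp) = 0 := by
    rw [EReal.coe_zero, zero_mul]
  rw [h0, add_zero]
  exact key γ hγprob hγfst hγsnd
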